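/- Let g ≥ 2 be an integer. In the field ℚ(q, t) of rational functions in two variables over ℚ, set Ω = ((1 + q² t)^{2g} − q^{2g} (1 + t)^{2g}) / ((1 − q²)(1 − q² t²)). Let ι be the ℚ-algebra automorphism of ℚ(q, t) determined by ι(q) = q⁻¹ and ι(t) = t⁻¹. Then q^{4g−4} · t^{2g−2} · ι(Ω) = Ω. -/

import Mathlib

/-!
Statement 4: the 'curious' symmetry of the refined Poincaré polynomial of `N_{2,1}`
(Theorem 0.2 of the paper), stated as a rational-function identity in the field
`ℚ(q, t) = FractionRing (MvPolynomial (Fin 2) ℚ)`, with `q = X 0` and `t = X 1`.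
-/

noncomputable section

/-- The field `ℚ(q, t)` of rational functions in two variables. -/
abbrev RatFuncQT : Type := FractionRing (MvPolynomial (Fin 2) ℚ)

/-- The variable `q ∈ ℚ(q, t)`. -/
def qq : RatFuncQT := algebraMap (MvPolynomial (Fin 2) ℚ) RatFuncQT (MvPolynomial.X 0)

/-- The variable `t ∈ ℚ(q, t)`. -/
def tt : RatFuncQT := algebraMap (MvPolynomial (Fin 2) ℚ) RatFuncQT (MvPolynomial.X 1)

/-- let `Ω = ((1+q²t)^{2g} − q^{2g}(1+t)^{2g}) / ((1−q²)(1−q²t²))` and let `ι`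
be the `ℚ`-algebra automorphism of `ℚ(q,t)` with `ι(q) = q⁻¹`, `ι(t) = t⁻¹`.  Then
`q^{4g−4} t^{2g−2} ι(Ω) = Ω`. -/
lemma inj' : Function.Injective (algebraMap (MvPolynomial (Fin 2) ℚ) RatFuncQT) :=
  IsFractionRing.injective _ _

lemma qq_ne : qq ≠ 0 :=
  (map_ne_zero_iff _ inj').mpr (MvPolynomial.X_ne_zero 0)

lemma tt_ne : tt ≠ 0 :=
  (map_ne_zero_iff _ inj').mpr (MvPolynomial.X_ne_zero 1)

lemma one_sub_q2_ne : (1 : RatFuncQT) - qq ^ 2 ≠ 0 := by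
  have h : (1 : RatFuncQT) - qq ^ 2 =
      algebraMap (MvPolynomial (Fin 2) ℚ) RatFuncQT (1 - MvPolynomial.X 0 ^ 2) := by
    simp [qq, map_sub, map_pow]
  rw [h]
  refine (map_ne_zero_iff _ inj').mpr ?_
  intro h'
  have := congrArg MvPolynomial.constantCoeff h'
  simp at this

lemma one_sub_q2t2_ne : (1 : RatFuncQT) - qq ^ 2 * tt ^ 2 ≠ 0 := by
  have h : (1 : RatFuncQT) - qq ^ 2 * tt ^ 2 =
      algebraMap (MvPolynomial (Fin 2) ℚ) RatFuncQT
        (1 - MvPolynomial.X 0 ^ 2 * MvPolynomial.X 1 ^ 2) := by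
    simp [qq, tt, map_sub, map_pow, map_mul]
  rw [h]
  refine (map_ne_zero_iff _ inj').mpr ?_
  intro h'
  have := congrArg MvPolynomial.constantCoeff h'
  simp at this

set_option maxHeartbeats 1600000 in
theorem stmt4 (g : ℕ) (hg : 2 ≤ g)
    (ι : RatFuncQT ≃ₐ[ℚ] RatFuncQT) (hq : ι qq = qq⁻¹) (ht : ι tt = tt⁻¹) :
    qq ^ (4 * g - 4) * tt ^ (2 * g - 2) *
        ι (((1 + qq ^ 2 * tt) ^ (2 * g) - qq ^ (2 * g) * (1 + tt) ^ (2 * g)) /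
          ((1 - qq ^ 2) * (1 - qq ^ 2 * tt ^ 2))) =
      ((1 + qq ^ 2 * tt) ^ (2 * g) - qq ^ (2 * g) * (1 + tt) ^ (2 * g)) /
        ((1 - qq ^ 2) * (1 - qq ^ 2 * tt ^ 2)) := by

  have hq0 := qq_ne
  have ht0 := tt_ne
  have h1 := one_sub_q2_ne
  have h2 := one_sub_q2t2_ne
  set A : RatFuncQT := (1 + qq ^ 2 * tt) ^ (2 * g) - qq ^ (2 * g) * (1 + tt) ^ (2 * g) with hAdef
  set D : RatFuncQT := (1 - qq ^ 2) * (1 - qq ^ 2 * tt ^ 2) with hDdef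
  have hD0 : D ≠ 0 := mul_ne_zero h1 h2
  have key1 : (1 : RatFuncQT) + qq⁻¹ ^ 2 * tt⁻¹ = (qq ^ 2 * tt)⁻¹ * (1 + qq ^ 2 * tt) := by
    field_simp; ring
  have key2 : (1 : RatFuncQT) + tt⁻¹ = tt⁻¹ * (1 + tt) := by
    field_simp; ring
  have key3 : (1 : RatFuncQT) - qq⁻¹ ^ 2 = (qq ^ 2)⁻¹ * (qq ^ 2 - 1) := by
    field_simp
  have key4 : (1 : RatFuncQT) - qq⁻¹ ^ 2 * tt⁻¹ ^ 2 =
      (qq ^ 2 * tt ^ 2)⁻¹ * (qq ^ 2 * tt ^ 2 - 1) := by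
    field_simp
  have hAe : ι A = ((qq ^ 2 * tt)⁻¹ * (1 + qq ^ 2 * tt)) ^ (2 * g) -
      (qq⁻¹) ^ (2 * g) * (tt⁻¹ * (1 + tt)) ^ (2 * g) := by
    rw [hAdef]
    simp only [map_sub, map_pow, map_mul, map_add, map_one, hq, ht]
    rw [key1, key2]
  have hDe : ι D = ((qq ^ 2)⁻¹ * (qq ^ 2 - 1)) * ((qq ^ 2 * tt ^ 2)⁻¹ * (qq ^ 2 * tt ^ 2 - 1)) := by
    rw [hDdef]
    simp only [map_sub, map_pow, map_mul, map_add, map_one, hq, ht]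
    rw [key3, key4]
  -- the two power cancellations
  have e1 : qq ^ (4 * g) * tt ^ (2 * g) * ((qq ^ 2 * tt)⁻¹ * (1 + qq ^ 2 * tt)) ^ (2 * g) =
      (1 + qq ^ 2 * tt) ^ (2 * g) := by
    have h : qq ^ (4 * g) * tt ^ (2 * g) = (qq ^ 2 * tt) ^ (2 * g) := by
      rw [mul_pow, ← pow_mul, show 2 * (2 * g) = 4 * g from by ring]
    rw [h, ← mul_pow]
    congr 1
    field_simp
  have e2 : qq ^ (4 * g) * tt ^ (2 * g) * ((qq⁻¹) ^ (2 * g) * (tt⁻¹ * (1 + tt)) ^ (2 * g)) =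
      qq ^ (2 * g) * (1 + tt) ^ (2 * g) := by
    have h : qq ^ (4 * g) = (qq ^ 2) ^ (2 * g) := by
      rw [← pow_mul, show 2 * (2 * g) = 4 * g from by ring]
    calc qq ^ (4 * g) * tt ^ (2 * g) * ((qq⁻¹) ^ (2 * g) * (tt⁻¹ * (1 + tt)) ^ (2 * g))
        = (qq ^ 2 * tt * qq⁻¹ * (tt⁻¹ * (1 + tt))) ^ (2 * g) := by
          rw [h]; simp only [mul_pow]; ring
      _ = (qq * (1 + tt)) ^ (2 * g) := by
          congr 1
          field_simp
      _ = qq ^ (2 * g) * (1 + tt) ^ (2 * g) := mul_pow _ _ _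
  have hiA : qq ^ (4 * g) * tt ^ (2 * g) * ι A = A := by
    rw [hAe, hAdef]
    linear_combination e1 - e2
  have hiD : qq ^ 4 * tt ^ 2 * ι D = D := by
    rw [hDe, hDdef]
    field_simp
    ring
  have hiD0 : ι D ≠ 0 := by
    intro h
    apply hD0
    rw [← hiD, h, mul_zero]
  rw [map_div₀, mul_div_assoc' (qq ^ (4 * g - 4) * tt ^ (2 * g - 2)) (ι A) (ι D),
    div_eq_div_iff hiD0 hD0]
  obtain ⟨k, rfl⟩ : ∃ k, g = k + 2 := ⟨g - 2, by omega⟩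
  have hne : qq ^ 4 * tt ^ 2 ≠ 0 := mul_ne_zero (pow_ne_zero _ hq0) (pow_ne_zero _ ht0)
  apply mul_left_cancel₀ hne
  simp only [show 4 * (k + 2) - 4 = 4 * k + 4 from by omega,
    show 2 * (k + 2) - 2 = 2 * k + 2 from by omega]
  linear_combination D * hiA - A * hiD


end
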